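/- A subset A of X_G is scattered if and only if A contains no piece-wise shifted FP-set. -/

import Mathlib

open Set

/-- A coarse structure on a set `X`. -/
structure CoarseStructure (X : Type*) where
  sets : Set (Set (X × X))
  diagonal_mem : ∀ E ∈ sets, ∀ x : X, (x, x) ∈ E
  comp_mem : ∀ E ∈ sets, ∀ E' ∈ sets,
    {q : X × X | ∃ z : X, (q.1, z) ∈ E ∧ (z, q.2) ∈ E'} ∈ sets
  inv_mem : ∀ E ∈ sets, {q : X × X | (q.2, q.1) ∈ E} ∈ sets
  subset_mem : ∀ E ∈ sets, ∀ E', E' ⊆ E → (∀ x : X, (x, x) ∈ E') → E' ∈ sets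
  covers : ⋃₀ sets = Set.univ

/-- The ball `E[A]`. -/
def ball {X : Type*} (E : Set (X × X)) (A : Set X) : Set X := {y | ∃ a ∈ A, (a, y) ∈ E}

/-- A bounded subset of a coarse space. -/
def CoarseStructure.Bounded {X : Type*} (C : CoarseStructure X) (B : Set X) : Prop :=
  ∃ E ∈ C.sets, ∃ x : X, B ⊆ ball E {x}

/-- A finitary coarse space: uniformly finite balls. -/
def CoarseStructure.Finitary {X : Type*} (C : CoarseStructure X) : Prop :=
  ∀ E ∈ C.sets, ∃ n : ℕ, ∀ x : X, (ball E {x}).Finite ∧ (ball E {x}).ncard < n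

/-- The set `X^♯` of ultrafilters all of whose members are unbounded. -/
def CoarseStructure.Sharp {X : Type*} (C : CoarseStructure X) : Set (Ultrafilter X) :=
  {p | ∀ P ∈ p, ¬ C.Bounded P}

/-- The parallelity relation on ultrafilters. -/
def CoarseStructure.Parallel {X : Type*} (C : CoarseStructure X) (p q : Ultrafilter X) : Prop :=
  ∃ E ∈ C.sets, ∀ P ∈ p, ball E P ∈ q

/-- The entourage determined by a set of permutations. -/
def entourage {X : Type*} (F : Set (Equiv.Perm X)) : Set (X × X) :=
  {q | ∃ g ∈ F, q.2 = g q.1}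

/-- The finitary coarse structure `X_G` determined by a group `G` of permutations of `X`:
its entourages are the diagonal-containing subsets of `{(x,gx) : x ∈ X, g ∈ F}`
for finite `F ⊆ G` with `id ∈ F`. -/
def XGsets {X : Type*} (G : Subgroup (Equiv.Perm X)) : Set (Set (X × X)) :=
  {E | (∀ x : X, (x, x) ∈ E) ∧ ∃ F : Finset (Equiv.Perm X),
    (1 : Equiv.Perm X) ∈ F ∧ ↑F ⊆ (G : Set (Equiv.Perm X)) ∧ E ⊆ entourage ↑F}

/-- A free ultrafilter. -/
def IsFree {X : Type*} (p : Ultrafilter X) : Prop := (p : Filter X) ≤ Filter.cofinite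

/-- `X*`, the space of free ultrafilters with the Stone topology. -/
def FreeUF (X : Type*) : Type _ := {p : Ultrafilter X // IsFree p}

instance (X : Type*) : TopologicalSpace (FreeUF X) :=
  instTopologicalSpaceSubtype

/-- The orbit `Gp` of an ultrafilter under the induced action `gp = {gP : P ∈ p}`. -/
def ufOrbit {X : Type*} (G : Subgroup (Equiv.Perm X)) (p : Ultrafilter X) :
    Set (Ultrafilter X) :=
  {q | ∃ g ∈ G, q = Ultrafilter.map (⇑g) p}

/-- The `p`-companion `Δ_p(A) = A* ∩ Gp`. -/
def compan {X : Type*} (G : Subgroup (Equiv.Perm X)) (p : Ultrafilter X) (A : Set X) :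
    Set (Ultrafilter X) :=
  {q | A ∈ q ∧ q ∈ ufOrbit G p}

/-- Large subsets of `X_G`. -/
def IsLarge {X : Type*} (G : Subgroup (Equiv.Perm X)) (A : Set X) : Prop :=
  ∃ E ∈ XGsets G, ball E A = Set.univ

/-- Thick subsets of `X_G`. -/
def IsThick {X : Type*} (G : Subgroup (Equiv.Perm X)) (A : Set X) : Prop :=
  ∀ E ∈ XGsets G, ∃ a ∈ A, ball E {a} ⊆ A

/-- Thin (discrete) subsets of `X_G`. -/
def IsThin {X : Type*} (G : Subgroup (Equiv.Perm X)) (A : Set X) : Prop :=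
  ∀ E ∈ XGsets G, ∃ B : Set X, B.Finite ∧ ∀ a ∈ A \ B, ball E {a} ∩ A = {a}

/-- Sparse subsets of `X_G`. -/
def IsSparse {X : Type*} (G : Subgroup (Equiv.Perm X)) (A : Set X) : Prop :=
  ∀ p : Ultrafilter X, IsFree p → (compan G p A).Finite

/-- Scattered subsets of `X_G`. -/
def IsScattered {X : Type*} (G : Subgroup (Equiv.Perm X)) (A : Set X) : Prop :=
  ∀ Y ⊆ A, Y.Infinite →
    ∃ p : Ultrafilter X, IsFree p ∧ Y ∈ p ∧ (compan G p Y).Finite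

/-- Close subsets of a coarse space. -/
def CoarseStructure.Close {X : Type*} (C : CoarseStructure X) (A B : Set X) : Prop :=
  ∃ E ∈ C.sets, A ⊆ ball E B ∧ B ⊆ ball E A

/-- Close subsets of `X_G`. -/
def CloseG {X : Type*} (G : Subgroup (Equiv.Perm X)) (A B : Set X) : Prop :=
  ∃ E ∈ XGsets G, A ⊆ ball E B ∧ B ⊆ ball E A

/-- Linked subsets of `X_G`. -/
def LinkedG {X : Type*} (G : Subgroup (Equiv.Perm X)) (A B : Set X) : Prop :=
  (A.Finite ∧ B.Finite) ∨
    ∃ A' ⊆ A, ∃ B' ⊆ B, A'.Infinite ∧ B'.Infinite ∧ CloseG G A' B'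


open Set

/-- The `n`-th block `{g_0^{ε_0} ⋯ g_n^{ε_n} x_n : ε_i ∈ {0,1}}`. -/
def pwBlock {X : Type*} (g : ℕ → Equiv.Perm X) (x : ℕ → X) (n : ℕ) : Set X :=
  {y | ∃ ε : Fin (n + 1) → Bool,
    y = ((List.ofFn fun i : Fin (n + 1) =>
      (g i) ^ (if ε i then 1 else 0)).prod : Equiv.Perm X) (x n)}

/-- A piece-wise shifted FP-set determined by the group `G`. -/
def IsPWShiftedFP {X : Type*} (G : Subgroup (Equiv.Perm X)) (Y : Set X) : Prop :=
  ∃ g : ℕ → Equiv.Perm X, ∃ x : ℕ → X,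
    (∀ n, g n ∈ G) ∧
    (∀ m n, m ≠ n → Disjoint (pwBlock g x m) (pwBlock g x n)) ∧
    (∀ n, (pwBlock g x n).ncard = 2 ^ (n + 1)) ∧
    Y = ⋃ n, pwBlock g x n

/-- The group of all self-homeomorphisms of a topological space, as a subgroup
of the permutation group. -/
def homeoSubgroup (X : Type*) [TopologicalSpace X] : Subgroup (Equiv.Perm X) where
  carrier := {g | Continuous g ∧ Continuous g.symm}
  one_mem' := ⟨continuous_id, continuous_id⟩
  mul_mem' := by
    rintro a b ⟨ha1, ha2⟩ ⟨hb1, hb2⟩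
    refine ⟨?_, ?_⟩
    · simpa [Equiv.Perm.mul_def, Equiv.coe_trans] using ha1.comp hb1
    · simpa [Equiv.Perm.mul_def, Equiv.symm_trans_apply] using (hb2.comp ha2 : _)
  inv_mem' := by
    rintro a ⟨ha1, ha2⟩
    exact ⟨ha2, by first | exact ha1 | simpa [Equiv.Perm.inv_def] using ha1⟩


/-- The parallelity relation on ultrafilters over the coarse space `X_G`. -/
def ParallelG {X : Type*} (G : Subgroup (Equiv.Perm X)) (p q : Ultrafilter X) : Prop :=
  ∃ E ∈ XGsets G, ∀ P ∈ p, ball E P ∈ q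

/-- Linked subsets of a coarse space. -/
def CoarseStructure.Linked {X : Type*} (C : CoarseStructure X) (A B : Set X) : Prop :=
  (C.Bounded A ∧ C.Bounded B) ∨
    ∃ A' ⊆ A, ∃ B' ⊆ B, ¬ C.Bounded A' ∧ ¬ C.Bounded B' ∧ C.Close A' B'

/-- The orbit `Gp` viewed as a subset of the space `X*` of free ultrafilters. -/
def freeOrbit {X : Type*} (G : Subgroup (Equiv.Perm X)) (p : Ultrafilter X) :
    Set (FreeUF X) :=
  {q | q.1 ∈ ufOrbit G p}

-- AUX HERE

section Aux

variable {X : Type*}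

/-! ### Basic ultrafilter helpers -/

private lemma finite_not_mem_of_free {p : Ultrafilter X} (hp : IsFree p) {S : Set X}
    (hS : S.Finite) : S ∉ p := by
  intro hmem
  have h1 : Sᶜ ∈ Filter.cofinite := by
    simp [Filter.mem_cofinite, hS]
  have h2 : Sᶜ ∈ p := hp h1
  have h3 : S ∩ Sᶜ ∈ p := Filter.inter_mem hmem h2
  rw [Set.inter_compl_self] at h3
  exact Filter.empty_notMem (p : Filter X) h3

private lemma infinite_of_mem_free {p : Ultrafilter X} (hp : IsFree p) {S : Set X}
    (hS : S ∈ p) : S.Infinite := by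
  exact fun h => finite_not_mem_of_free hp h hS

private lemma exists_free_ultrafilter_of_infinite {S : Set X} (hS : S.Infinite) :
    ∃ p : Ultrafilter X, IsFree p ∧ S ∈ p := by
  have hne : (Filter.cofinite ⊓ Filter.principal S).NeBot := by
    constructor
    intro h
    rw [Filter.inf_principal_eq_bot] at h
    exact hS (Set.not_infinite.mp (by simpa [Filter.mem_cofinite, compl_compl] using h))
  obtain ⟨p, hp⟩ := Filter.exists_ultrafilter_le (Filter.cofinite ⊓ Filter.principal S)
  refine ⟨p, le_trans hp inf_le_left, ?_⟩
  exact le_trans hp inf_le_right (Filter.mem_principal_self S)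

private lemma isFree_map {p : Ultrafilter X} (hp : IsFree p) (g : Equiv.Perm X) :
    IsFree (p.map ⇑g) := by
  intro S hS
  rw [Ultrafilter.mem_coe, Ultrafilter.mem_map]
  apply hp
  rw [Filter.mem_cofinite] at hS ⊢
  rw [← Set.preimage_compl]
  exact Set.Finite.preimage (g.injective.injOn) hS

private lemma perm_map_map (p : Ultrafilter X) (g h : Equiv.Perm X) :
    (p.map ⇑h).map ⇑g = p.map ⇑(g * h) := by
  rw [Ultrafilter.map_map]
  rfl

private lemma map_one_perm (p : Ultrafilter X) : p.map ⇑(1 : Equiv.Perm X) = p := by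
  have : ⇑(1 : Equiv.Perm X) = id := rfl
  rw [this, Ultrafilter.map_id]

private lemma self_mem_ufOrbit (G : Subgroup (Equiv.Perm X)) (p : Ultrafilter X) :
    p ∈ ufOrbit G p :=
  ⟨1, G.one_mem, (map_one_perm p).symm⟩

private lemma map_mem_ufOrbit {G : Subgroup (Equiv.Perm X)} {p q : Ultrafilter X}
    (hq : q ∈ ufOrbit G p) {h : Equiv.Perm X} (hh : h ∈ G) :
    q.map ⇑h ∈ ufOrbit G p := by
  obtain ⟨g, hg, rfl⟩ := hq
  exact ⟨h * g, G.mul_mem hh hg, (perm_map_map p h g).symm⟩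

private lemma isFree_of_mem_ufOrbit {G : Subgroup (Equiv.Perm X)} {p q : Ultrafilter X}
    (hp : IsFree p) (hq : q ∈ ufOrbit G p) : IsFree q := by
  obtain ⟨g, _, rfl⟩ := hq
  exact isFree_map hp g

private lemma map_eq_of_agree {p : Ultrafilter X} {f g : X → X}
    (h : {x | f x = g x} ∈ p) : p.map f = p.map g := by
  apply Ultrafilter.coe_injective
  apply Filter.map_congr
  exact h

private lemma neq_set_mem_of_map_ne {p : Ultrafilter X} {f g : X → X}
    (h : p.map f ≠ p.map g) : {x | f x ≠ g x} ∈ p := by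
  have : ¬ ({x | f x = g x} ∈ p) := fun hmem => h (map_eq_of_agree hmem)
  have h2 : {x | f x = g x}ᶜ ∈ p := Ultrafilter.compl_mem_iff_notMem.mpr this
  exact h2

private lemma ne_of_disjoint_mem {p q : Ultrafilter X} {S T : Set X}
    (hS : S ∈ p) (hT : T ∈ q) (hd : S ∩ T = ∅) : p ≠ q := by
  rintro rfl
  have := Filter.inter_mem hS hT
  rw [hd] at this
  exact Filter.empty_notMem (p : Filter X) this

/-! ### Word products -/

private def wprod (g : ℕ → Equiv.Perm X) (n : ℕ) (ε : Fin n → Bool) : Equiv.Perm X :=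
  (List.ofFn fun i : Fin n => (g i) ^ (if ε i then 1 else 0)).prod

private lemma pwBlock_eq_range (g : ℕ → Equiv.Perm X) (x : ℕ → X) (n : ℕ) :
    pwBlock g x n = Set.range (fun ε : Fin (n + 1) → Bool => wprod g (n + 1) ε (x n)) := by
  ext y
  simp only [pwBlock, Set.mem_setOf_eq, Set.mem_range, wprod]
  constructor
  · rintro ⟨ε, h⟩; exact ⟨ε, h.symm⟩
  · rintro ⟨ε, h⟩; exact ⟨ε, h.symm⟩

private lemma wprod_zero (g : ℕ → Equiv.Perm X) (ε : Fin 0 → Bool) : wprod g 0 ε = 1 := by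
  simp [wprod]

private lemma wprod_succ (g : ℕ → Equiv.Perm X) (n : ℕ) (ε : Fin (n + 1) → Bool) :
    wprod g (n + 1) ε =
      wprod g n (fun i => ε i.castSucc) * (g n) ^ (if ε (Fin.last n) then 1 else 0) := by
  unfold wprod
  rw [List.ofFn_succ']
  rw [List.concat_eq_append, List.prod_append]
  simp

private lemma wprod_mem {G : Subgroup (Equiv.Perm X)} {g : ℕ → Equiv.Perm X}
    (hg : ∀ i, g i ∈ G) (n : ℕ) (ε : Fin n → Bool) : wprod g n ε ∈ G := by
  apply Subgroup.list_prod_mem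
  intro a ha
  rw [List.mem_ofFn] at ha
  obtain ⟨i, rfl⟩ := ha
  exact pow_mem (hg i) _

private lemma wprod_congr {g g' : ℕ → Equiv.Perm X} (n : ℕ) (ε : Fin n → Bool)
    (h : ∀ i < n, g i = g' i) : wprod g n ε = wprod g' n ε := by
  unfold wprod
  exact congrArg List.prod (congrArg List.ofFn (funext fun i => by rw [h i i.isLt]))

private lemma wprod_split (g : ℕ → Equiv.Perm X) (k m : ℕ) (ε : Fin (k + m) → Bool) :
    wprod g (k + m) ε = wprod g k (fun i => ε (Fin.castAdd m i)) *
      (List.ofFn fun j : Fin m => g (k + j) ^ (if ε (Fin.natAdd k j) then 1 else 0)).prod := by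
  unfold wprod
  rw [List.ofFn_add, List.prod_append]
  congr 2

private lemma fin_ext_last {n : ℕ} {ε ε' : Fin (n + 1) → Bool}
    (h1 : ∀ i : Fin n, ε i.castSucc = ε' i.castSucc) (h2 : ε (Fin.last n) = ε' (Fin.last n)) :
    ε = ε' := by
  funext i
  rcases Fin.eq_castSucc_or_eq_last i with ⟨j, rfl⟩ | rfl
  · exact h1 j
  · exact h2

private lemma card_fun_bool (n : ℕ) : Nat.card (Fin n → Bool) = 2 ^ n := by
  rw [Nat.card_eq_fintype_card]
  rw [Fintype.card_fun]
  simp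

private lemma ncard_range_of_injective {n : ℕ} {φ : (Fin n → Bool) → X}
    (h : Function.Injective φ) : (Set.range φ).ncard = 2 ^ n := by
  rw [← Set.image_univ, Set.ncard_image_of_injective _ h, Set.ncard_univ, card_fun_bool]

private lemma injective_of_ncard_range {n : ℕ} {φ : (Fin n → Bool) → X}
    (h : (Set.range φ).ncard = 2 ^ n) : Function.Injective φ := by
  have hsurj : Function.Surjective (Set.rangeFactorization φ) := Set.rangeFactorization_surjective
  have hcard : Nat.card (Fin n → Bool) = Nat.card (Set.range φ) := by
    rw [card_fun_bool, Nat.card_coe_set_eq, h]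
  have hbij : Function.Bijective (Set.rangeFactorization φ) :=
    (Nat.bijective_iff_surjective_and_card _).mpr ⟨hsurj, hcard⟩
  intro a b hab
  apply hbij.injective
  exact Subtype.ext hab

private lemma flip_word (g : ℕ → Equiv.Perm X) (δ : ℕ → Bool) (k m : ℕ)
    (ε : Fin (k + m + 1) → Bool)
    (hpre : ∀ i : ℕ, ∀ h : i ≤ k, ε ⟨i, by omega⟩ = δ i) :
    (wprod g k (fun i => δ i) * (if δ k then (g k)⁻¹ else (g k)) *
        (wprod g k (fun i => δ i))⁻¹) * wprod g (k + m + 1) ε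
      = wprod g (k + m + 1) (fun i => if (i : ℕ) = k then !δ k else ε i) := by
  set ε' : Fin (k + m + 1) → Bool := fun i => if (i : ℕ) = k then !δ k else ε i with hε'
  have hpre' : ∀ i : ℕ, ∀ h : i < k, ε' ⟨i, by omega⟩ = δ i := by
    intro i hik
    simp only [hε']
    rw [if_neg (by omega)]
    exact hpre i hik.le
  have hatk : ε (⟨k, by omega⟩ : Fin (k + m + 1)) = δ k := hpre k le_rfl
  have hatk' : ε' (⟨k, by omega⟩ : Fin (k + m + 1)) = !δ k := by
    simp [hε']
  -- the common tail
  set R : Equiv.Perm X :=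
    (List.ofFn fun j : Fin m =>
      g (k + ↑(Fin.succ j)) ^ (if ε (Fin.natAdd k (Fin.succ j)) then 1 else 0)).prod with hR
  have key : ∀ η : Fin (k + m + 1) → Bool, (∀ i : ℕ, ∀ h : i < k, η ⟨i, by omega⟩ = δ i) →
      (∀ j : Fin m, η (Fin.natAdd k (Fin.succ j)) = ε (Fin.natAdd k (Fin.succ j))) →
      wprod g (k + m + 1) η =
        wprod g k (fun i => δ i) *
          ((g k) ^ (if η (⟨k, by omega⟩ : Fin (k + m + 1)) then 1 else 0) * R) := by
    intro η hη htail
    have hsplit : wprod g (k + m + 1) η =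
        wprod g k (fun i => η (Fin.castAdd (m + 1) i)) *
          (List.ofFn fun j : Fin (m + 1) =>
            g (k + ↑j) ^ (if η (Fin.natAdd k j) then 1 else 0)).prod :=
      wprod_split g k (m + 1) η
    have h1 : (fun i : Fin k => η (Fin.castAdd (m + 1) i)) = (fun i : Fin k => δ i) := by
      funext i
      have hcast : (Fin.castAdd (m + 1) i : Fin (k + (m + 1))) = ⟨i.1, by omega⟩ := by
        ext; simp
      rw [hcast]
      exact hη i.1 i.isLt
    have h2 : (List.ofFn fun j : Fin (m + 1) =>
        g (k + ↑j) ^ (if η (Fin.natAdd k j) then 1 else 0)) =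
        (g k ^ (if η (⟨k, by omega⟩ : Fin (k + m + 1)) then 1 else 0)) ::
          (List.ofFn fun j : Fin m =>
            g (k + ↑(Fin.succ j)) ^ (if η (Fin.natAdd k (Fin.succ j)) then 1 else 0)) := by
      have hz : Fin.natAdd k (0 : Fin (m + 1)) = (⟨k, by omega⟩ : Fin (k + (m + 1))) := by
        ext; simp
      have hhead : g (k + ↑(0 : Fin (m + 1))) ^ (if η (Fin.natAdd k (0 : Fin (m + 1))) then 1 else 0)
          = g k ^ (if η (⟨k, by omega⟩ : Fin (k + m + 1)) then 1 else 0) := by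
        rw [hz]; simp
      rw [List.ofFn_succ, hhead]
    have h3 : (List.ofFn fun j : Fin m =>
        g (k + ↑(Fin.succ j)) ^ (if η (Fin.natAdd k (Fin.succ j)) then 1 else 0)) =
        (List.ofFn fun j : Fin m =>
          g (k + ↑(Fin.succ j)) ^ (if ε (Fin.natAdd k (Fin.succ j)) then 1 else 0)) := by
      congr 1
      funext j
      rw [htail j]
    rw [hsplit, h1, h2, h3, List.prod_cons, hR]
  have E1 := key ε (fun i h => hpre i h.le) (fun j => rfl)
  have E2 := key ε' hpre' (fun j => by
    simp only [hε']
    rw [if_neg]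
    have : ((Fin.natAdd k (Fin.succ j) : Fin (k + (m + 1))) : ℕ) = k + (j.1 + 1) := by simp
    omega)
  rw [E1, E2, hatk, hatk']
  set w := wprod g k (fun i => δ i) with hw
  have hb : (if δ k then (g k)⁻¹ else g k) * (g k) ^ (if δ k = true then 1 else 0)
      = (g k) ^ (if (!δ k) = true then 1 else 0) := by
    cases hδ : δ k <;> simp [hδ]
  rw [mul_assoc (w * (if δ k then (g k)⁻¹ else g k)) w⁻¹ _, inv_mul_cancel_left,
    mul_assoc w _ _, ← mul_assoc (if δ k then (g k)⁻¹ else g k) _ R, hb]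

/-! ### Forward direction: a scattered set contains no piecewise shifted FP-set -/

private lemma no_pwFP_of_scattered {G : Subgroup (Equiv.Perm X)} {A : Set X}
    (hsc : IsScattered G A) (Y : Set X) (hYA : Y ⊆ A) : ¬ IsPWShiftedFP G Y := by
  classical
  rintro ⟨g, x, hgG, hdisj, hcard, rfl⟩
  set φ : ∀ n : ℕ, (Fin (n + 1) → Bool) → X := fun n ε => wprod g (n + 1) ε (x n) with hφ
  have hrange : ∀ n, pwBlock g x n = Set.range (φ n) := fun n => pwBlock_eq_range g x n
  have hinj : ∀ n, Function.Injective (φ n) := by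
    intro n
    apply injective_of_ncard_range (n := n + 1)
    rw [← hrange]
    exact hcard n
  -- uniqueness of block index
  have urep : ∀ {n m : ℕ} {ε : Fin (n + 1) → Bool} {ε' : Fin (m + 1) → Bool},
      φ n ε = φ m ε' → n = m := by
    intro n m ε ε' h
    by_contra hne
    have h1 : φ n ε ∈ pwBlock g x n := by rw [hrange]; exact ⟨ε, rfl⟩
    have h2 : φ n ε ∈ pwBlock g x m := by rw [hrange]; exact ⟨ε', h.symm⟩
    exact Set.disjoint_left.mp (hdisj n m hne) h1 h2
  -- Y is infinite
  have hYinf : (⋃ n, pwBlock g x n).Infinite := by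
    apply Set.infinite_of_injective_forall_mem
      (f := fun n : ℕ => φ n (fun _ => false))
    · intro n m h
      exact urep h
    · intro n
      exact Set.mem_iUnion.mpr ⟨n, by rw [hrange]; exact ⟨_, rfl⟩⟩
  obtain ⟨p, hpfree, hYp, hcompan⟩ := hsc _ hYA hYinf
  -- coordinate sets
  set CS : ℕ → Bool → Set X := fun k b =>
    {y | ∃ n, ∃ h : k ≤ n, ∃ ε : Fin (n + 1) → Bool,
      ε ⟨k, by omega⟩ = b ∧ y = φ n ε} with hCS
  have hCSY : ∀ k b, CS k b ⊆ ⋃ n, pwBlock g x n := by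
    rintro k b y ⟨n, hkn, ε, hb, rfl⟩
    exact Set.mem_iUnion.mpr ⟨n, by rw [hrange]; exact ⟨ε, rfl⟩⟩
  -- tail sets belong to p
  have htail : ∀ k : ℕ, CS k true ∪ CS k false ∈ p := by
    intro k
    have hfin : (⋃ m ∈ Finset.range k, pwBlock g x m).Finite := by
      apply Set.Finite.biUnion (Finset.range k).finite_toSet
      intro m _
      rw [hrange]
      exact Set.finite_range _
    have hcompl : (⋃ m ∈ Finset.range k, pwBlock g x m)ᶜ ∈ p :=
      Ultrafilter.compl_mem_iff_notMem.mpr (finite_not_mem_of_free hpfree hfin)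
    have hsub : (⋃ n, pwBlock g x n) ∩ (⋃ m ∈ Finset.range k, pwBlock g x m)ᶜ ⊆
        CS k true ∪ CS k false := by
      rintro y ⟨hy1, hy2⟩
      obtain ⟨n, hn⟩ := Set.mem_iUnion.mp hy1
      have hkn : k ≤ n := by
        by_contra hlt
        exact hy2 (Set.mem_biUnion (Finset.mem_range.mpr (by omega)) hn)
      rw [hrange] at hn
      obtain ⟨ε, rfl⟩ := hn
      cases hb : ε ⟨k, by omega⟩
      · exact Or.inr ⟨n, hkn, ε, hb, rfl⟩
      · exact Or.inl ⟨n, hkn, ε, hb, rfl⟩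
    exact Filter.mem_of_superset (Filter.inter_mem hYp hcompl) hsub
  set δ : ℕ → Bool := fun k => if CS k true ∈ p then true else false with hδdef
  have hC : ∀ k, CS k (δ k) ∈ p := by
    intro k
    by_cases h : CS k true ∈ p
    · simpa [hδdef, h] using h
    · have := (Ultrafilter.union_mem_iff.mp (htail k)).resolve_left h
      simpa [hδdef, h] using this
  -- uniqueness of coordinates
  have coord_unique : ∀ k b b' y, y ∈ CS k b → y ∈ CS k b' → b = b' := by
    rintro k b b' y ⟨n, hkn, ε, hb, rfl⟩ ⟨n', hkn', ε', hb', heq⟩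
    obtain rfl : n = n' := (urep heq.symm).symm
    obtain rfl : ε' = ε := hinj n heq.symm
    rw [← hb, ← hb']
  -- representation of points in the prefix set
  have pref_rep : ∀ k y, y ∈ (⋂ i : Fin (k + 1), CS i (δ i)) →
      ∃ n, ∃ hkn : k ≤ n, ∃ ε : Fin (n + 1) → Bool,
        (∀ i : ℕ, ∀ hik : i ≤ k, ε ⟨i, by omega⟩ = δ i) ∧ y = φ n ε := by
    intro k y hy
    have hyk := Set.mem_iInter.mp hy (Fin.last k)
    obtain ⟨n, hkn, ε, hεk, rfl⟩ := hyk
    refine ⟨n, hkn, ε, ?_, rfl⟩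
    intro i hik
    have hyi := Set.mem_iInter.mp hy ⟨i, by omega⟩
    obtain ⟨n', hin', ε', hε', heq⟩ := hyi
    obtain rfl : n = n' := (urep heq.symm).symm
    obtain rfl : ε' = ε := hinj n heq.symm
    convert hε' using 2
  have hPref : ∀ k, (⋂ i : Fin (k + 1), CS i (δ i)) ∈ p := by
    intro k
    rw [← Ultrafilter.mem_coe, Filter.iInter_mem]
    intro i
    exact hC i
  -- the flip permutations
  set hk : ℕ → Equiv.Perm X := fun k =>
    wprod g k (fun i => δ i) * (if δ k then (g k)⁻¹ else (g k)) *
      (wprod g k (fun i => δ i))⁻¹ with hhk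
  have hkG : ∀ k, hk k ∈ G := by
    intro k
    refine G.mul_mem (G.mul_mem (wprod_mem hgG k _) ?_) (G.inv_mem (wprod_mem hgG k _))
    cases δ k
    · simpa using hgG k
    · simpa using G.inv_mem (hgG k)
  -- the target sets
  set Z : ℕ → Set X := fun k => CS k (!δ k) ∩ ⋂ i : Fin k, CS i (δ i) with hZ
  set q : ℕ → Ultrafilter X := fun k => p.map ⇑(hk k) with hq
  have hmaps : ∀ k, (⋂ i : Fin (k + 1), CS i (δ i)) ⊆ ⇑(hk k) ⁻¹' (Z k) := by
    intro k y hy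
    obtain ⟨n, hkn, ε, hpre, rfl⟩ := pref_rep k y hy
    obtain ⟨m, rfl⟩ : ∃ m, n = k + m := ⟨n - k, by omega⟩
    have hflip := flip_word g δ k m ε hpre
    have happ : hk k (φ (k + m) ε) =
        φ (k + m) (fun i => if (i : ℕ) = k then !δ k else ε i) := by
      show hk k (wprod g (k + m + 1) ε (x (k + m))) = _
      rw [← Equiv.Perm.mul_apply, hhk, hflip]
    rw [Set.mem_preimage, happ]
    constructor
    · exact ⟨k + m, by omega, _, by simp, rfl⟩
    · apply Set.mem_iInter.mpr
      intro i
      refine ⟨k + m, by omega, _, ?_, rfl⟩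
      have : ¬ ((⟨(i : ℕ), by omega⟩ : Fin (k + m + 1)) : ℕ) = k := by
        simp; omega
      rw [if_neg this]
      exact hpre i.1 i.isLt.le
  have hZq : ∀ k, Z k ∈ q k := by
    intro k
    rw [hq]
    rw [Ultrafilter.mem_map]
    exact Filter.mem_of_superset (hPref k) (hmaps k)
  have hqcompan : ∀ k, q k ∈ compan G p (⋃ n, pwBlock g x n) := by
    intro k
    constructor
    · exact Filter.mem_of_superset (hZq k)
        (fun y hy => hCSY k (!δ k) hy.1)
    · exact ⟨hk k, hkG k, rfl⟩
  have hqinj : Function.Injective q := by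
    have key : ∀ j k, j < k → q j ≠ q k := by
      intro j k hjk
      apply ne_of_disjoint_mem (hZq j) (hZq k)
      apply Set.eq_empty_iff_forall_notMem.mpr
      rintro y ⟨hyj, hyk⟩
      have h1 : y ∈ CS j (!δ j) := hyj.1
      have h2 : y ∈ CS j (δ j) := Set.mem_iInter.mp hyk.2 ⟨j, hjk⟩
      have := coord_unique j _ _ y h1 h2
      simp at this
    intro j k h
    rcases lt_trichotomy j k with hlt | heq | hgt
    · exact absurd h (key j k hlt)
    · exact heq
    · exact absurd h.symm (key k j hgt)
  exact (Set.infinite_of_injective_forall_mem hqinj hqcompan) hcompan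

/-! ### A combinatorial closure operator on sets of ultrafilters -/

private def UCl (E : Set (Ultrafilter X)) : Set (Ultrafilter X) :=
  {p | ∀ S ∈ p, ∃ r ∈ E, S ∈ r}

private lemma subset_UCl (E : Set (Ultrafilter X)) : E ⊆ UCl E :=
  fun r hr => fun S hS => ⟨r, hr, hS⟩

private lemma UCl_mono {E F : Set (Ultrafilter X)} (h : E ⊆ F) : UCl E ⊆ UCl F := by
  intro p hp S hS
  obtain ⟨r, hr, hSr⟩ := hp S hS
  exact ⟨r, h hr, hSr⟩

private lemma UCl_idem (E : Set (Ultrafilter X)) : UCl (UCl E) ⊆ UCl E := by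
  intro p hp S hS
  obtain ⟨r, hr, hSr⟩ := hp S hS
  exact hr S hSr

private lemma UCl_finite {E : Set (Ultrafilter X)} (hE : E.Finite) : UCl E ⊆ E := by
  intro p hp
  by_contra hpE
  have hsep : ∀ r ∈ E, ∃ S : Set X, S ∈ p ∧ S ∉ r := by
    intro r hr
    by_contra hcon
    push_neg at hcon
    have hle : (r : Filter X) ≤ (p : Filter X) := fun S hS => hcon S hS
    exact hpE (Ultrafilter.eq_of_le hle ▸ hr)
  choose S hS1 hS2 using hsep
  classical
  set S' : Ultrafilter X → Set X := fun r => if h : r ∈ E then S r h else Set.univ with hS'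
  have hT : (⋂ r ∈ E, S' r) ∈ p := by
    rw [← Ultrafilter.mem_coe, Filter.biInter_mem hE]
    intro r hr
    simp only [hS', dif_pos hr]
    exact hS1 r hr
  obtain ⟨r, hr, hTr⟩ := hp _ hT
  have : S r hr ∈ r := by
    refine Filter.mem_of_superset hTr ?_
    intro y hy
    have h2 := Set.mem_iInter.mp (Set.mem_iInter.mp hy r) hr
    simpa only [hS', dif_pos hr] using h2
  exact hS2 r hr this

/-! ### Existence of a heavy point -/

private lemma exists_heavy {G : Subgroup (Equiv.Perm X)} {Y : Set X} (hYinf : Y.Infinite)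
    (hbad : ∀ p : Ultrafilter X, IsFree p → Y ∈ p → ¬ (compan G p Y).Finite) :
    ∃ q : Ultrafilter X, IsFree q ∧ Y ∈ q ∧
      ∀ S ∈ q, {r | r ∈ ufOrbit G q ∧ S ∈ r}.Infinite := by
  classical
  set Ystar : Set (Ultrafilter X) := {p | IsFree p ∧ Y ∈ p} with hYstar
  set E : Ultrafilter X → Set (Ultrafilter X) := fun q => compan G q Y with hE
  have hEsub : ∀ q ∈ Ystar, E q ⊆ Ystar := by
    rintro q ⟨hqf, hqY⟩ r ⟨hrY, hrorb⟩
    exact ⟨isFree_of_mem_ufOrbit hqf hrorb, hrY⟩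
  have hselfE : ∀ q ∈ Ystar, q ∈ E q := by
    rintro q ⟨hqf, hqY⟩
    exact ⟨hqY, self_mem_ufOrbit G q⟩
  have hUClY : UCl Ystar ⊆ Ystar := by
    intro p hp
    constructor
    · intro S hS
      rw [Ultrafilter.mem_coe]
      by_contra hSp
      obtain ⟨r, hr, hcr⟩ := hp _ (Ultrafilter.compl_mem_iff_notMem.mpr hSp)
      have hSfin : Sᶜ.Finite := by rwa [Filter.mem_cofinite] at hS
      exact finite_not_mem_of_free hr.1 hSfin hcr
    · by_contra hYp
      obtain ⟨r, hr, hcr⟩ := hp _ (Ultrafilter.compl_mem_iff_notMem.mpr hYp)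
      exact (Ultrafilter.compl_mem_iff_notMem.mp hcr) hr.2
  have key : ∀ q ∈ Ystar, ∀ u, u ∈ UCl (E q) → E u ⊆ UCl (E q) := by
    rintro q hq u hu s ⟨hsY, h, hhG, rfl⟩
    intro S hS
    have h1 : (⇑h ⁻¹' (S ∩ Y)) ∈ u := by
      have : S ∩ Y ∈ u.map ⇑h := Filter.inter_mem hS hsY
      rwa [Ultrafilter.mem_map] at this
    have hYu : Y ∈ u := (hUClY (UCl_mono (hEsub q hq) hu)).2
    have hB : (⇑h ⁻¹' (S ∩ Y)) ∩ Y ∈ u := Filter.inter_mem h1 hYu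
    obtain ⟨r, hrEq, hBr⟩ := hu _ hB
    refine ⟨r.map ⇑h, ⟨?_, map_mem_ufOrbit hrEq.2 hhG⟩, ?_⟩
    · rw [Ultrafilter.mem_map]
      exact Filter.mem_of_superset hBr (fun y hy => hy.1.2)
    · rw [Ultrafilter.mem_map]
      exact Filter.mem_of_superset hBr (fun y hy => hy.1.1)
  set 𝒦 : Set (Set (Ultrafilter X)) :=
    {K | K.Nonempty ∧ K ⊆ Ystar ∧ UCl K ⊆ K ∧ ∀ q ∈ K, UCl (E q) ⊆ K} with h𝒦
  have hYstar𝒦 : Ystar ∈ 𝒦 := by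
    refine ⟨?_, subset_rfl, hUClY, ?_⟩
    · obtain ⟨p, h1, h2⟩ := exists_free_ultrafilter_of_infinite hYinf
      exact ⟨p, h1, h2⟩
    · intro q hq
      exact (UCl_mono (hEsub q hq)).trans hUClY
  have hchains : ∀ c ⊆ 𝒦, IsChain (· ⊆ ·) c → c.Nonempty →
      ∃ lb ∈ 𝒦, ∀ s ∈ c, lb ⊆ s := by
    intro c hc𝒦 hchain hcne
    obtain ⟨K₀, hK₀⟩ := hcne
    -- the filter of sets eventually common to all members of some K in the chain
    set F : Filter X :=
      { sets := {S | ∃ K ∈ c, ∀ r ∈ K, S ∈ r}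
        univ_sets := ⟨K₀, hK₀, fun r _ => Filter.univ_mem⟩
        sets_of_superset := by
          rintro S T ⟨K, hK, hS⟩ hST
          exact ⟨K, hK, fun r hr => Filter.mem_of_superset (hS r hr) hST⟩
        inter_sets := by
          rintro S T ⟨K1, hK1, hS⟩ ⟨K2, hK2, hT⟩
          rcases hchain.total hK1 hK2 with h12 | h21
          · exact ⟨K1, hK1, fun r hr => Filter.inter_mem (hS r hr) (hT r (h12 hr))⟩
          · exact ⟨K2, hK2, fun r hr => Filter.inter_mem (hS r (h21 hr)) (hT r hr)⟩ } with hF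
    haveI hFne : F.NeBot := by
      constructor
      intro hbot
      have hmem : (∅ : Set X) ∈ F := hbot ▸ Filter.mem_bot
      obtain ⟨K, hKc, hK⟩ := hmem
      obtain ⟨r, hr⟩ := (hc𝒦 hKc).1
      exact Filter.empty_notMem (r : Filter X) (hK r hr)
    obtain ⟨p₀, hp₀⟩ := Filter.exists_ultrafilter_le F
    have hp₀mem : ∀ K ∈ c, p₀ ∈ K := by
      intro K hKc
      apply (hc𝒦 hKc).2.2.1
      intro S hS
      by_contra hcon
      push_neg at hcon
      have hcompl : Sᶜ ∈ F := ⟨K, hKc, fun r hr =>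
        Ultrafilter.compl_mem_iff_notMem.mpr (hcon r hr)⟩
      exact (Ultrafilter.compl_mem_iff_notMem.mp (hp₀ hcompl)) hS
    refine ⟨⋂₀ c, ⟨⟨p₀, Set.mem_sInter.mpr (fun K hKc => hp₀mem K hKc)⟩, ?_, ?_, ?_⟩,
      fun s hs => Set.sInter_subset_of_mem hs⟩
    · intro r hr
      exact (hc𝒦 hK₀).2.1 (Set.mem_sInter.mp hr K₀ hK₀)
    · intro u hu
      apply Set.mem_sInter.mpr
      intro K hKc
      exact (hc𝒦 hKc).2.2.1 (UCl_mono (fun r hr => Set.mem_sInter.mp hr K hKc) hu)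
    · intro q hq u hu
      apply Set.mem_sInter.mpr
      intro K hKc
      exact (hc𝒦 hKc).2.2.2 q (Set.mem_sInter.mp hq K hKc) hu
  obtain ⟨Kb, _, hKbmin⟩ := zorn_superset_nonempty 𝒦 hchains Ystar hYstar𝒦
  obtain ⟨⟨q₀, hq₀⟩, hKbY, hKbcl, hKbE⟩ := hKbmin.prop
  have hmin : ∀ q ∈ Kb, Kb ⊆ UCl (E q) := by
    intro q hq
    have h𝒦' : UCl (E q) ∈ 𝒦 := by
      refine ⟨⟨q, subset_UCl _ (hselfE q (hKbY hq))⟩, ?_, UCl_idem _, ?_⟩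
      · exact (UCl_mono (hEsub q (hKbY hq))).trans hUClY
      · intro u hu
        exact (UCl_mono (key q (hKbY hq) u hu)).trans (UCl_idem _)
    exact hKbmin.2 h𝒦' (hKbE q hq)
  by_contra hcon
  push_neg at hcon
  -- Kb is infinite
  have hEq₀inf : (E q₀).Infinite := hbad q₀ (hKbY hq₀).1 (hKbY hq₀).2
  have hKbinf : Kb.Infinite :=
    hEq₀inf.mono ((subset_UCl _).trans (hKbE q₀ hq₀))
  haveI : Infinite (↥Kb) := hKbinf.to_subtype
  obtain ⟨𝒰, h𝒰⟩ := Filter.exists_ultrafilter_le (Filter.cofinite : Filter ↥Kb)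
  set p : Ultrafilter X := 𝒰.bind (fun u => (u : Ultrafilter X)) with hpdef
  have hpmem : ∀ S : Set X, S ∈ p ↔ {u : ↥Kb | S ∈ (u : Ultrafilter X)} ∈ 𝒰 := by
    intro S
    rfl
  have hpK : p ∈ Kb := by
    apply hKbcl
    intro S hS
    obtain ⟨u, hu⟩ := Ultrafilter.nonempty_of_mem ((hpmem S).mp hS)
    exact ⟨u, u.2, hu⟩
  have hpY : p ∈ Ystar := hKbY hpK
  obtain ⟨S, hSp, hSnin⟩ := hcon p hpY.1 hpY.2
  have hfin : {r | r ∈ ufOrbit G p ∧ S ∈ r}.Finite := hSnin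
  set S' := S ∩ Y with hS'def
  have hS'p : S' ∈ p := Filter.inter_mem hSp hpY.2
  have hD : {r | r ∈ ufOrbit G p ∧ S' ∈ r}.Finite := by
    apply hfin.subset
    intro r hr
    exact ⟨hr.1, Filter.mem_of_superset hr.2 Set.inter_subset_left⟩
  have hbound : ∀ u : ↥Kb, S' ∈ (u : Ultrafilter X) →
      (u : Ultrafilter X) ∈ {r | r ∈ ufOrbit G p ∧ S' ∈ r} := by
    intro u hS'u
    have hu2 : (u : Ultrafilter X) ∈ UCl (E p) := hmin p hpK u.2
    have hu3 : (u : Ultrafilter X) ∈ UCl (E p ∩ {r | S' ∈ r}) := by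
      intro T hT
      obtain ⟨r, hr, hTr⟩ := hu2 (T ∩ S') (Filter.inter_mem hT hS'u)
      exact ⟨r, ⟨hr, Filter.mem_of_superset hTr Set.inter_subset_right⟩,
        Filter.mem_of_superset hTr Set.inter_subset_left⟩
    have hfin2 : (E p ∩ {r | S' ∈ r}).Finite := by
      apply hD.subset
      rintro r ⟨⟨hrY, hrorb⟩, hrS⟩
      exact ⟨hrorb, hrS⟩
    have hu4 := UCl_finite hfin2 hu3
    exact ⟨hu4.1.2, hu4.2⟩
  have hT𝒰 : {u : ↥Kb | S' ∈ (u : Ultrafilter X)} ∈ 𝒰 := (hpmem S').mp hS'p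
  have hTfin : {u : ↥Kb | S' ∈ (u : Ultrafilter X)}.Finite := by
    have hsub : {u : ↥Kb | S' ∈ (u : Ultrafilter X)} ⊆
        (fun u : ↥Kb => (u : Ultrafilter X)) ⁻¹' {r | r ∈ ufOrbit G p ∧ S' ∈ r} :=
      fun u hu => hbound u hu
    exact (hD.preimage (Subtype.coe_injective.injOn)).subset hsub
  have hcompl : {u : ↥Kb | S' ∈ (u : Ultrafilter X)}ᶜ ∈ 𝒰 := by
    apply h𝒰
    rw [Filter.mem_cofinite]
    simpa using hTfin
  exact (Ultrafilter.compl_mem_iff_notMem.mp hcompl) hT𝒰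

/-! ### Construction of a piecewise shifted FP-set from a heavy point -/

section Construction

variable (G : Subgroup (Equiv.Perm X)) (Y : Set X) (q : Ultrafilter X)

private def Dset (g : ℕ → Equiv.Perm X) (n : ℕ) : Set X :=
  {x | (∀ ε : Fin n → Bool, wprod g n ε x ∈ Y) ∧
    ∀ ε ε' : Fin n → Bool, ε ≠ ε' → wprod g n ε x ≠ wprod g n ε' x}

private lemma Dset_zero (g : ℕ → Equiv.Perm X) : Y ⊆ Dset Y g 0 := by
  intro x hx
  constructor
  · intro ε
    rw [wprod_zero]
    exact hx
  · intro ε ε' hne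
    exact absurd (funext fun i => i.elim0) hne

private lemma Dset_congr {g g' : ℕ → Equiv.Perm X} (n : ℕ) (h : ∀ i < n, g i = g' i) :
    Dset Y g n = Dset Y g' n := by
  unfold Dset
  have hw : ∀ ε : Fin n → Bool, wprod g n ε = wprod g' n ε := fun ε => wprod_congr n ε h
  ext x
  simp only [Set.mem_setOf_eq]
  constructor
  · rintro ⟨h1, h2⟩
    exact ⟨fun ε => (hw ε) ▸ h1 ε, fun ε ε' hne => by rw [← hw, ← hw]; exact h2 ε ε' hne⟩
  · rintro ⟨h1, h2⟩
    exact ⟨fun ε => (hw ε).symm ▸ h1 ε, fun ε ε' hne => by rw [hw, hw]; exact h2 ε ε' hne⟩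

private lemma Dset_step {g : ℕ → Equiv.Perm X} {n : ℕ} {x : X}
    (hx : x ∈ Dset Y g n) (hgx : (g n) x ∈ Dset Y g n)
    (hmv : ∀ ε ε' : Fin n → Bool, (g n) x ≠ ((wprod g n ε)⁻¹ * wprod g n ε') x) :
    x ∈ Dset Y g (n + 1) := by
  obtain ⟨hx1, hx2⟩ := hx
  obtain ⟨hgx1, hgx2⟩ := hgx
  have happ : ∀ ε : Fin (n + 1) → Bool, wprod g (n + 1) ε x =
      wprod g n (fun i => ε i.castSucc) ((g n ^ (if ε (Fin.last n) then 1 else 0)) x) := by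
    intro ε
    rw [wprod_succ]
    rfl
  constructor
  · intro ε
    rw [happ]
    cases hl : ε (Fin.last n)
    · simpa using hx1 _
    · simpa using hgx1 _
  · intro ε ε' hne
    rw [happ, happ]
    cases hl : ε (Fin.last n) <;> cases hl' : ε' (Fin.last n) <;>
      simp only [if_true, if_false, Bool.false_eq_true, pow_one, pow_zero,
        Equiv.Perm.one_apply]
    -- false, false
    · have hne' : (fun i => ε i.castSucc) ≠ (fun i : Fin n => ε' i.castSucc) := by
        intro hcon
        exact hne (fin_ext_last (fun i => congrFun hcon i) (by rw [hl, hl']))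
      exact hx2 _ _ hne'
    -- false, true
    · intro hcon
      apply hmv (fun i => ε' i.castSucc) (fun i => ε i.castSucc)
      have := congrArg (⇑(wprod g n (fun i => ε' i.castSucc))⁻¹) hcon.symm
      rw [Equiv.Perm.inv_def, Equiv.symm_apply_apply] at this
      rw [Equiv.Perm.mul_apply]
      exact this
    -- true, false
    · intro hcon
      apply hmv (fun i => ε i.castSucc) (fun i => ε' i.castSucc)
      have := congrArg (⇑(wprod g n (fun i => ε i.castSucc))⁻¹) hcon
      rw [Equiv.Perm.inv_def, Equiv.symm_apply_apply] at this
      rw [Equiv.Perm.mul_apply]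
      exact this
    -- true, true
    · have hne' : (fun i => ε i.castSucc) ≠ (fun i : Fin n => ε' i.castSucc) := by
        intro hcon
        exact hne (fin_ext_last (fun i => congrFun hcon i) (by rw [hl, hl']))
      exact hgx2 _ _ hne'

open scoped Classical in
private noncomputable def nextPerm (g : ℕ → Equiv.Perm X) (n : ℕ) : Equiv.Perm X :=
  if h : ∃ gn : Equiv.Perm X, gn ∈ G ∧ ⇑gn ⁻¹' (Dset Y g n) ∈ q ∧
      ∀ ε ε' : Fin n → Bool, {x | gn x ≠ ((wprod g n ε)⁻¹ * wprod g n ε') x} ∈ q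
  then h.choose else 1

private noncomputable def gseq : ℕ → (ℕ → Equiv.Perm X)
  | 0 => fun _ => 1
  | n + 1 => Function.update (gseq n) n (nextPerm G Y q (gseq n) n)

private noncomputable def gF : ℕ → Equiv.Perm X := fun n => gseq G Y q (n + 1) n

private lemma gseq_eq : ∀ n k, k < n → gseq G Y q n k = gF G Y q k := by
  intro n
  induction n with
  | zero => intro k hk; omega
  | succ n ih =>
    intro k hk
    by_cases hkn : k = n
    · subst hkn
      rfl
    · have hk' : k < n := by omega
      show Function.update (gseq G Y q n) n _ k = _
      rw [Function.update_of_ne hkn]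
      exact ih k hk'

private lemma gF_eq (n : ℕ) : gF G Y q n = nextPerm G Y q (gseq G Y q n) n := by
  show Function.update (gseq G Y q n) n (nextPerm G Y q (gseq G Y q n) n) n = _
  rw [Function.update_self]

private lemma next_exists
    (hh : ∀ S ∈ q, {r | r ∈ ufOrbit G q ∧ S ∈ r}.Infinite)
    (g : ℕ → Equiv.Perm X) (n : ℕ) (hD : Dset Y g n ∈ q) :
    ∃ gn : Equiv.Perm X, gn ∈ G ∧ ⇑gn ⁻¹' (Dset Y g n) ∈ q ∧
      ∀ ε ε' : Fin n → Bool, {x | gn x ≠ ((wprod g n ε)⁻¹ * wprod g n ε') x} ∈ q := by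
  classical
  set B : Set (Ultrafilter X) := Set.range (fun z : ((Fin n → Bool) × (Fin n → Bool)) =>
    Ultrafilter.map (⇑((wprod g n z.1)⁻¹ * wprod g n z.2)) q) with hB
  have hBfin : B.Finite := Set.finite_range _
  have hinf := hh (Dset Y g n) hD
  obtain ⟨r, hrmem, hrB⟩ := (hinf.diff hBfin).nonempty
  obtain ⟨⟨gn, hgnG, rfl⟩, hDr⟩ := hrmem
  refine ⟨gn, hgnG, ?_, ?_⟩
  · rwa [Ultrafilter.mem_map] at hDr
  · intro ε ε'
    have hne : Ultrafilter.map ⇑gn q ≠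
        Ultrafilter.map (⇑((wprod g n ε)⁻¹ * wprod g n ε')) q := by
      intro heq
      exact hrB ⟨(ε, ε'), heq.symm⟩
    exact neq_set_mem_of_map_ne hne

private lemma Dmem (hYq : Y ∈ q)
    (hh : ∀ S ∈ q, {r | r ∈ ufOrbit G q ∧ S ∈ r}.Infinite) :
    ∀ n, Dset Y (gF G Y q) n ∈ q := by
  intro n
  induction n with
  | zero => exact Filter.mem_of_superset hYq (Dset_zero Y _)
  | succ n ih =>
    have hcong : Dset Y (gseq G Y q n) n = Dset Y (gF G Y q) n :=
      Dset_congr Y n (fun i hi => gseq_eq G Y q n i hi)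
    have hD : Dset Y (gseq G Y q n) n ∈ q := by rw [hcong]; exact ih
    have hex := next_exists G Y q hh (gseq G Y q n) n hD
    have hspec := hex.choose_spec
    have hgFn : gF G Y q n = hex.choose := by
      rw [gF_eq, nextPerm, dif_pos hex]
    have hwcong : ∀ ε : Fin n → Bool, wprod (gseq G Y q n) n ε = wprod (gF G Y q) n ε :=
      fun ε => wprod_congr n ε (fun i hi => gseq_eq G Y q n i hi)
    -- the three ingredients, for gF
    have h1 : ⇑(gF G Y q n) ⁻¹' (Dset Y (gF G Y q) n) ∈ q := by
      rw [hgFn, ← hcong]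
      exact hspec.2.1
    have h2 : ∀ ε ε' : Fin n → Bool,
        {x | gF G Y q n x ≠ ((wprod (gF G Y q) n ε)⁻¹ * wprod (gF G Y q) n ε') x} ∈ q := by
      intro ε ε'
      rw [hgFn, ← hwcong, ← hwcong]
      exact hspec.2.2 ε ε'
    have hI : (Dset Y (gF G Y q) n ∩ ⇑(gF G Y q n) ⁻¹' (Dset Y (gF G Y q) n) ∩
        ⋂ z : ((Fin n → Bool) × (Fin n → Bool)),
          {x | gF G Y q n x ≠ ((wprod (gF G Y q) n z.1)⁻¹ * wprod (gF G Y q) n z.2) x}) ∈ q := by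
      refine Filter.inter_mem (Filter.inter_mem ih h1) ?_
      exact (Filter.iInter_mem).mpr (fun z => h2 z.1 z.2)
    refine Filter.mem_of_superset hI ?_
    rintro x ⟨⟨hxD, hxpre⟩, hxmv⟩
    exact Dset_step Y hxD hxpre
      (fun ε ε' => Set.mem_iInter.mp hxmv (ε, ε'))

private lemma gF_spec (hYq : Y ∈ q)
    (hh : ∀ S ∈ q, {r | r ∈ ufOrbit G q ∧ S ∈ r}.Infinite) (n : ℕ) :
    gF G Y q n ∈ G := by
  have hcong : Dset Y (gseq G Y q n) n = Dset Y (gF G Y q) n :=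
    Dset_congr Y n (fun i hi => gseq_eq G Y q n i hi)
  have hD : Dset Y (gseq G Y q n) n ∈ q := by rw [hcong]; exact Dmem G Y q hYq hh n
  have hex := next_exists G Y q hh (gseq G Y q n) n hD
  have hgFn : gF G Y q n = hex.choose := by
    rw [gF_eq, nextPerm, dif_pos hex]
  rw [hgFn]
  exact hex.choose_spec.1

open scoped Classical in
private noncomputable def nextPt [Infinite X] (g : ℕ → Equiv.Perm X) (xs : ℕ → X) (n : ℕ) : X :=
  if h : ∃ z : X, z ∈ Dset Y g (n + 1) ∧ ∀ ε : Fin (n + 1) → Bool, ∀ m : ℕ, m < n →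
      ∀ ε' : Fin (m + 1) → Bool, wprod g (n + 1) ε z ≠ wprod g (m + 1) ε' (xs m)
  then h.choose else Classical.arbitrary X

private noncomputable def xseq [Infinite X] : ℕ → (ℕ → X)
  | 0 => fun _ => Classical.arbitrary X
  | n + 1 => Function.update (xseq n) n (nextPt Y (gF G Y q) (xseq n) n)

private noncomputable def xF [Infinite X] : ℕ → X := fun n => xseq G Y q (n + 1) n

private lemma xseq_eq [Infinite X] : ∀ n k, k < n → xseq G Y q n k = xF G Y q k := by
  intro n
  induction n with
  | zero => intro k hk; omega
  | succ n ih =>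
    intro k hk
    by_cases hkn : k = n
    · subst hkn
      rfl
    · have hk' : k < n := by omega
      show Function.update (xseq G Y q n) n _ k = _
      rw [Function.update_of_ne hkn]
      exact ih k hk'

private lemma xF_eq [Infinite X] (n : ℕ) :
    xF G Y q n = nextPt Y (gF G Y q) (xseq G Y q n) n := by
  show Function.update (xseq G Y q n) n _ n = _
  rw [Function.update_self]

private lemma nextPt_exists [Infinite X] (hfree : IsFree q) (g : ℕ → Equiv.Perm X)
    (xs : ℕ → X) (n : ℕ) (hD : Dset Y g (n + 1) ∈ q) :
    ∃ z : X, z ∈ Dset Y g (n + 1) ∧ ∀ ε : Fin (n + 1) → Bool, ∀ m : ℕ, m < n →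
      ∀ ε' : Fin (m + 1) → Bool, wprod g (n + 1) ε z ≠ wprod g (m + 1) ε' (xs m) := by
  classical
  set bad : Set X := ⋃ (ε : Fin (n + 1) → Bool), ⋃ (m : Fin n), ⋃ (ε' : Fin (m.1 + 1) → Bool),
    {(wprod g (n + 1) ε).symm (wprod g (m.1 + 1) ε' (xs m.1))} with hbad
  have hbadfin : bad.Finite := by
    apply Set.finite_iUnion
    intro ε
    apply Set.finite_iUnion
    intro m
    apply Set.finite_iUnion
    intro ε'
    exact Set.finite_singleton _
  have hDinf : (Dset Y g (n + 1)).Infinite := infinite_of_mem_free hfree hD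
  obtain ⟨z, hz⟩ := (hDinf.diff hbadfin).nonempty
  refine ⟨z, hz.1, ?_⟩
  intro ε m hm ε' heq
  apply hz.2
  rw [hbad]
  apply Set.mem_iUnion.mpr ⟨ε, _⟩
  apply Set.mem_iUnion.mpr ⟨⟨m, hm⟩, _⟩
  apply Set.mem_iUnion.mpr ⟨ε', _⟩
  rw [Set.mem_singleton_iff, Equiv.eq_symm_apply]
  exact heq

private lemma xF_spec [Infinite X] (hfree : IsFree q) (hYq : Y ∈ q)
    (hh : ∀ S ∈ q, {r | r ∈ ufOrbit G q ∧ S ∈ r}.Infinite) (n : ℕ) :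
    xF G Y q n ∈ Dset Y (gF G Y q) (n + 1) ∧
      ∀ ε : Fin (n + 1) → Bool, ∀ m : ℕ, m < n → ∀ ε' : Fin (m + 1) → Bool,
        wprod (gF G Y q) (n + 1) ε (xF G Y q n) ≠
          wprod (gF G Y q) (m + 1) ε' (xF G Y q m) := by
  have hD : Dset Y (gF G Y q) (n + 1) ∈ q := Dmem G Y q hYq hh (n + 1)
  have hex := nextPt_exists Y q hfree (gF G Y q) (xseq G Y q n) n hD
  have hxFn : xF G Y q n = hex.choose := by
    rw [xF_eq, nextPt, dif_pos hex]
  have hspec := hex.choose_spec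
  rw [hxFn]
  refine ⟨hspec.1, ?_⟩
  intro ε m hm ε'
  have := hspec.2 ε m hm ε'
  rwa [xseq_eq G Y q n m hm] at this

end Construction

private lemma pwFP_of_heavy {G : Subgroup (Equiv.Perm X)} {Y : Set X} {q : Ultrafilter X}
    [Infinite X] (hfree : IsFree q) (hYq : Y ∈ q)
    (hh : ∀ S ∈ q, {r | r ∈ ufOrbit G q ∧ S ∈ r}.Infinite) :
    ∃ Z : Set X, Z ⊆ Y ∧ IsPWShiftedFP G Z := by
  refine ⟨⋃ n, pwBlock (gF G Y q) (xF G Y q) n, ?_, gF G Y q, xF G Y q, ?_, ?_, ?_, rfl⟩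
  · -- contained in Y
    intro y hy
    obtain ⟨n, hn⟩ := Set.mem_iUnion.mp hy
    rw [pwBlock_eq_range] at hn
    obtain ⟨ε, rfl⟩ := hn
    exact ((xF_spec G Y q hfree hYq hh n).1).1 ε
  · -- generators in G
    exact fun n => gF_spec G Y q hYq hh n
  · -- disjoint blocks
    have key : ∀ m n : ℕ, m < n →
        Disjoint (pwBlock (gF G Y q) (xF G Y q) m) (pwBlock (gF G Y q) (xF G Y q) n) := by
      intro m n hmn
      rw [Set.disjoint_left]
      intro y hym hyn
      rw [pwBlock_eq_range] at hym hyn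
      obtain ⟨ε', hε'⟩ := hym
      obtain ⟨ε, hε⟩ := hyn
      exact (xF_spec G Y q hfree hYq hh n).2 ε m hmn ε' (hε.trans hε'.symm)
    intro m n hmn
    rcases lt_or_gt_of_ne hmn with h | h
    · exact key m n h
    · exact (key n m h).symm
  · -- cardinality of blocks
    intro n
    rw [pwBlock_eq_range]
    apply _root_.ncard_range_of_injective
    intro ε ε' heq
    by_contra hne
    exact ((xF_spec G Y q hfree hYq hh n).1).2 ε ε' hne heq

end Aux

/-- A subset `A` of `X_G` is scattered iff `A` contains no piece-wise
shifted FP-set. -/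
theorem scattered_iff_no_pwFP {X : Type*} [Infinite X]
    (G : Subgroup (Equiv.Perm X)) (A : Set X) :
    IsScattered G A ↔ ∀ Y ⊆ A, ¬ IsPWShiftedFP G Y := by
  constructor
  · intro hsc Y hYA
    exact no_pwFP_of_scattered hsc Y hYA
  · intro hno Y hYA hYinf
    by_contra hcon
    push_neg at hcon
    have hbad : ∀ p : Ultrafilter X, IsFree p → Y ∈ p → ¬ (compan G p Y).Finite := by
      intro p hpf hpY hfin
      exact hcon p hpf hpY hfin
    obtain ⟨q, hqf, hqY, hh⟩ := exists_heavy hYinf hbad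
    obtain ⟨Z, hZY, hZFP⟩ := pwFP_of_heavy hqf hqY hh
    exact hno Z (hZY.trans hYA) hZFP
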